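/- Let X be a metric space, let μ be a Borel probability measure on X, and let x₁, x₂ ∈ X with x₂ ∈ supp(μ). Define, for ε > 0, R°(ε) := μ(B(x₁,ε))/μ(B(x₂,ε)) using open balls and R̄(ε) := μ(B̄(x₁,ε))/μ(B̄(x₂,ε)) using closed balls. Then liminf_{ε→0} R̄(ε) = liminf_{ε→0} R°(ε). -/

import Mathlib

open MeasureTheory Metric Filter Set Topology ENNReal

noncomputable section

/-- The topological support of a Borel measure on a metric space: the set of points all of
whose open balls have positive measure. -/
def measureSupport {X : Type*} [PseudoMetricSpace X] [MeasurableSpace X]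
    (μ : Measure X) : Set X :=
  {x | ∀ r > 0, 0 < μ (Metric.ball x r)}

/-- `I` is an Onsager--Machlup functional for `μ` on `E`: for all `x₁ x₂ ∈ E`, the ratio of
small-ball probabilities tends to `exp (I x₂ - I x₁)` as the radius tends to `0⁺`. -/
def IsOMFunctional {X : Type*} [PseudoMetricSpace X] [MeasurableSpace X]
    (μ : Measure X) (E : Set X) (I : X → ℝ) : Prop :=
  ∀ x₁ ∈ E, ∀ x₂ ∈ E,
    Filter.Tendsto (fun r : ℝ => μ (Metric.ball x₁ r) / μ (Metric.ball x₂ r))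
      (𝓝[>] 0) (𝓝 (ENNReal.ofReal (Real.exp (I x₂ - I x₁))))

/-- Property `M(μ, E)`: there is `x⋆ ∈ E` such that for every `x ∉ E` the small-ball
probability ratio `μ(B(x,r)) / μ(B(x⋆,r))` tends to `0` as `r → 0⁺`. -/
def PropertyM {X : Type*} [PseudoMetricSpace X] [MeasurableSpace X]
    (μ : Measure X) (E : Set X) : Prop :=
  ∃ xs ∈ E, ∀ x ∉ E,
    Filter.Tendsto (fun r : ℝ => μ (Metric.ball x r) / μ (Metric.ball xs r)) (𝓝[>] 0) (𝓝 0)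

/-- The measure of closed balls tends, from the left at radius `r`, to the measure of the open
ball of radius `r`. -/
lemma tendsto_measure_closedBall_nhdsWithin_Iio
    {X : Type*} [MetricSpace X] [MeasurableSpace X]
    (μ : Measure X) (x : X) {r : ℝ} (hr : 0 < r) :
    Tendsto (fun r' : ℝ => μ (Metric.closedBall x r')) (𝓝[<] r) (𝓝 (μ (Metric.ball x r))) := by
  have hmono : Monotone fun r' : ℝ => μ (Metric.closedBall x r') :=
    fun a b hab => measure_mono (closedBall_subset_closedBall hab)
  have h := hmono.tendsto_nhdsLT r
  convert h using 2
  apply le_antisymm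
  · -- μ (ball x r) ≤ sSup
    have hU : (⋃ n : ℕ, Metric.closedBall x (r - 1 / (n + 1))) = Metric.ball x r := by
      ext y
      simp only [mem_iUnion, Metric.mem_closedBall, Metric.mem_ball]
      constructor
      · rintro ⟨n, hn⟩
        have : (0:ℝ) < 1 / (n + 1) := by positivity
        linarith
      · intro hy
        obtain ⟨n, hn⟩ := exists_nat_one_div_lt (show (0:ℝ) < r - dist y x by linarith)
        exact ⟨n, by linarith⟩
    have hmono' : Monotone fun n : ℕ => Metric.closedBall x (r - 1 / (n + 1)) := by
      intro a b hab
      apply closedBall_subset_closedBall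
      have : (1:ℝ) / (b + 1) ≤ 1 / (a + 1) := by
        apply one_div_le_one_div_of_le (by positivity)
        exact_mod_cast add_le_add_left (Nat.cast_le.2 hab) 1
      linarith
    rw [← hU, hmono'.measure_iUnion]
    apply iSup_le
    intro n
    apply le_sSup
    refine ⟨r - 1 / (n + 1), ?_, rfl⟩
    have : (0:ℝ) < 1 / (n + 1) := by positivity
    simp only [mem_Iio]; linarith
  · apply sSup_le
    rintro b ⟨r', hr', rfl⟩
    exact measure_mono (closedBall_subset_ball hr')

/-- The measure of open balls tends, from the right at radius `r`, to the measure of the closed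
ball of radius `r`. -/
lemma tendsto_measure_ball_nhdsWithin_Ioi
    {X : Type*} [MetricSpace X] [MeasurableSpace X] [BorelSpace X]
    (μ : Measure X) [IsProbabilityMeasure μ] (x : X) (r : ℝ) :
    Tendsto (fun r' : ℝ => μ (Metric.ball x r')) (𝓝[>] r) (𝓝 (μ (Metric.closedBall x r))) := by
  have hmono : Monotone fun r' : ℝ => μ (Metric.ball x r') :=
    fun a b hab => measure_mono (ball_subset_ball hab)
  have h := hmono.tendsto_nhdsGT r
  convert h using 2
  apply le_antisymm
  · apply le_sInf
    rintro b ⟨r', hr', rfl⟩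
    exact measure_mono (closedBall_subset_ball hr')
  · have hI : (⋂ n : ℕ, Metric.ball x (r + 1 / (n + 1))) = Metric.closedBall x r := by
      ext y
      simp only [mem_iInter, Metric.mem_closedBall, Metric.mem_ball]
      constructor
      · intro hy
        by_contra hlt
        push_neg at hlt
        obtain ⟨n, hn⟩ := exists_nat_one_div_lt (show (0:ℝ) < dist y x - r by linarith)
        have := hy n
        linarith
      · intro hy n
        have : (0:ℝ) < 1 / (n + 1) := by positivity
        linarith
    have hanti : Antitone fun n : ℕ => Metric.ball x (r + 1 / (n + 1)) := by
      intro a b hab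
      apply ball_subset_ball
      have : (1:ℝ) / (b + 1) ≤ 1 / (a + 1) := by
        apply one_div_le_one_div_of_le (by positivity)
        exact_mod_cast add_le_add_left (Nat.cast_le.2 hab) 1
      linarith
    rw [← hI, hanti.measure_iInter (fun n => measurableSet_ball.nullMeasurableSet)
      ⟨0, measure_ne_top μ _⟩]
    apply le_iInf
    intro n
    apply sInf_le
    refine ⟨r + 1 / (n + 1), ?_, rfl⟩
    have : (0:ℝ) < 1 / (n + 1) := by positivity
    simp only [mem_Ioi]; linarith

theorem liminf_closed_ball_ratio_eq_liminf_open_ball_ratio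
    {X : Type*} [MetricSpace X] [MeasurableSpace X] [BorelSpace X]
    (μ : Measure X) [IsProbabilityMeasure μ]
    (x₁ x₂ : X) (hx₂ : x₂ ∈ measureSupport μ) :
    Filter.liminf
        (fun ε : ℝ => μ (Metric.closedBall x₁ ε) / μ (Metric.closedBall x₂ ε)) (𝓝[>] 0)
      = Filter.liminf
        (fun ε : ℝ => μ (Metric.ball x₁ ε) / μ (Metric.ball x₂ ε)) (𝓝[>] 0) := by
  set f : ℝ → ℝ≥0∞ := fun ε => μ (Metric.closedBall x₁ ε) / μ (Metric.closedBall x₂ ε) with hf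
  set g : ℝ → ℝ≥0∞ := fun ε => μ (Metric.ball x₁ ε) / μ (Metric.ball x₂ ε) with hg
  -- denominators are positive
  have hpos : ∀ r : ℝ, 0 < r → 0 < μ (Metric.ball x₂ r) := hx₂
  -- f tends to g r from the left at every r > 0
  have hleft : ∀ r : ℝ, 0 < r → Tendsto f (𝓝[<] r) (𝓝 (g r)) := by
    intro r hr
    apply ENNReal.Tendsto.div (tendsto_measure_closedBall_nhdsWithin_Iio μ x₁ hr)
      (Or.inr (hpos r hr).ne') (tendsto_measure_closedBall_nhdsWithin_Iio μ x₂ hr)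
      (Or.inl (measure_ne_top μ _))
  -- g tends to f r from the right at every r > 0
  have hright : ∀ r : ℝ, 0 < r → Tendsto g (𝓝[>] r) (𝓝 (f r)) := by
    intro r hr
    have h2 : μ (Metric.closedBall x₂ r) ≠ 0 :=
      (lt_of_lt_of_le (hpos r hr) (measure_mono ball_subset_closedBall)).ne'
    apply ENNReal.Tendsto.div (tendsto_measure_ball_nhdsWithin_Ioi μ x₁ r)
      (Or.inr h2) (tendsto_measure_ball_nhdsWithin_Ioi μ x₂ r)
      (Or.inl (measure_ne_top μ _))
  rw [Filter.liminf_eq, Filter.liminf_eq]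
  congr 1
  ext a
  simp only [mem_setOf_eq]
  constructor
  · -- eventually a ≤ f → eventually a ≤ g
    intro h
    obtain ⟨δ, hδ, hsub⟩ := mem_nhdsGT_iff_exists_Ioc_subset.1 h
    apply mem_of_superset (Ioc_mem_nhdsGT_of_mem (α := ℝ) ⟨le_refl 0, hδ⟩)
    intro r hr
    refine ge_of_tendsto (hleft r hr.1) ?_
    apply mem_of_superset (Ioo_mem_nhdsLT_of_mem (a := (0:ℝ)) ⟨hr.1, le_refl r⟩)
    intro r' hr'
    exact hsub ⟨hr'.1, le_of_lt (lt_of_lt_of_le hr'.2 hr.2)⟩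
  · intro h
    obtain ⟨δ, hδ, hsub⟩ := mem_nhdsGT_iff_exists_Ioc_subset.1 h
    apply mem_of_superset (Ioo_mem_nhdsGT_of_mem (α := ℝ) ⟨le_refl 0, hδ⟩)
    intro r hr
    refine ge_of_tendsto (hright r hr.1) ?_
    apply mem_of_superset (Ioo_mem_nhdsGT_of_mem (c := r) ⟨le_refl r, hr.2⟩)
    intro r' hr'
    exact hsub ⟨lt_trans hr.1 hr'.1, le_of_lt hr'.2⟩
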